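/- Let q > 2 and α ∈ (0, 1/2]. With A₁, A₂, A₃ as in the strict-convexity computation (A₁ = Σ_{k≥0}[(2k+2α)^{-q}+(2k+2-2α)^{-q}], A₂ = Σ_{k≥0}[(2k+2α)^{-(q-2)}+(2k+2-2α)^{-(q-2)}-2(2k+2)^{-(q-2)}], A₃ = Σ_{k≥0}[(2k+2α)^{-(q-1)}-(2k+2-2α)^{-(q-1)}]), there exists a constant C > 0 depending only on q such that A₁·A₂ - A₃² ≥ C·α^{-(q-2)} for all α ∈ (0,1/2]. -/

import Mathlib

open Real Set Filter Topology

-- summability of (2k+c)^(-s) for s>1, c>0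
lemma aux_summable {c s : ℝ} (hc : 0 < c) (hs : 1 < s) :
    Summable (fun k : ℕ => (2*(k:ℝ)+c) ^ (-s)) := by
  refine (summable_nat_add_iff 1).mp ?_
  have hbase : Summable (fun n : ℕ => ((n:ℝ)+1) ^ (-s)) := by
    have h0 : Summable (fun n : ℕ => (n:ℝ) ^ (-s)) :=
      summable_nat_rpow.mpr (by linarith)
    have := (summable_nat_add_iff 1).mpr h0
    simpa using this
  refine Summable.of_nonneg_of_le (fun n => (Real.rpow_pos_of_pos (by positivity) _).le)
    (fun n => ?_) hbase
  exact Real.rpow_le_rpow_of_nonpos (by positivity) (by push_cast; linarith) (by linarith)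

-- tendsto 0
lemma aux_tendsto {c s : ℝ} (hc : 0 < c) (hs : 0 < s) :
    Tendsto (fun k : ℕ => (2*(k:ℝ)+c) ^ (-s)) atTop (𝓝 0) := by
  have h1 : Tendsto (fun k : ℕ => 2*(k:ℝ)+c) atTop atTop := by
    apply Filter.tendsto_atTop_add_const_right
    exact Tendsto.const_mul_atTop two_pos tendsto_natCast_atTop_atTop
  exact (tendsto_rpow_neg_atTop hs).comp h1

-- telescoping sums
lemma aux_telescope {g : ℕ → ℝ} (hmono : ∀ n, g (n+1) ≤ g n)
    (h0 : Tendsto g atTop (𝓝 0)) :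
    HasSum (fun n => g n - g (n+1)) (g 0) := by
  have hnn : ∀ n, 0 ≤ g n - g (n+1) := fun n => sub_nonneg.2 (hmono n)
  rw [hasSum_iff_tendsto_nat_of_nonneg hnn]
  have he : (fun n => ∑ i ∈ Finset.range n, (g i - g (i+1))) = fun n => g 0 - g n := by
    funext n; exact Finset.sum_range_sub' g n
  rw [he]
  simpa using tendsto_const_nhds.sub h0

-- midpoint convexity for x^(-s)
lemma aux_midpoint {x h s : ℝ} (hs : 0 ≤ s) (hh : 0 ≤ h) (hxh : 0 < x - h) :
    2 * x ^ (-s) ≤ (x - h) ^ (-s) + (x + h) ^ (-s) := by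
  have hx : 0 < x := by linarith
  have hb : 0 < x + h := by linarith
  have h1 : (x - h) * (x + h) ≤ x * x := by nlinarith [sq_nonneg h]
  have h2 : (x*x) ^ (-s) ≤ ((x-h)*(x+h)) ^ (-s) :=
    Real.rpow_le_rpow_of_nonpos (by positivity) h1 (by linarith)
  rw [Real.mul_rpow hxh.le hb.le, Real.mul_rpow hx.le hx.le] at h2
  have hu : 0 < (x-h) ^ (-s) := Real.rpow_pos_of_pos hxh _
  have hv : 0 < (x+h) ^ (-s) := Real.rpow_pos_of_pos hb _
  have hw : 0 < x ^ (-s) := Real.rpow_pos_of_pos hx _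
  nlinarith [sq_nonneg ((x-h)^(-s) - (x+h)^(-s)), sq_nonneg ((x-h)^(-s) + (x+h)^(-s) - 2*x^(-s))]

-- lower bound on the k=0 gap d0
lemma aux_d0 {α r : ℝ} (hα : 0 < α) (hα2 : α ≤ 1/2) (hr : 1 ≤ r) :
    4 * (6:ℝ)^(-r) * α ≤ (2-2*α)^(-r) - (2+2*α)^(-r) := by
  set a : ℝ := 2 - 2*α with ha_def
  set b : ℝ := 2 + 2*α with hb_def
  have ha1 : 1 ≤ a := by simp [ha_def]; linarith
  have ha0 : 0 < a := by linarith
  have hb0 : 0 < b := by simp [hb_def]; linarith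
  have ha2 : a ≤ 2 := by simp [ha_def]; linarith
  have hb3 : b ≤ 3 := by simp [hb_def]; linarith
  set A := a ^ r with hA_def
  set B := b ^ r with hB_def
  have hA0 : 0 < A := Real.rpow_pos_of_pos ha0 _
  have hB0 : 0 < B := Real.rpow_pos_of_pos hb0 _
  have haA : a ≤ A := by
    have := Real.rpow_le_rpow_of_exponent_le ha1 hr
    rwa [Real.rpow_one] at this
  set t : ℝ := 4*α/a with ht_def
  have ht0 : 0 ≤ t := by positivity
  have hber : 1 + r*t ≤ (1+t)^r :=
    one_add_mul_self_le_rpow_one_add (by linarith) hr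
  have hab : a * (1+t) = b := by
    have hat : a * t = 4*α := by rw [ht_def]; field_simp [ha0.ne']
    rw [mul_add, mul_one, hat, ha_def, hb_def]; ring
  have hBr : A * (1 + r*t) ≤ B := by
    calc A * (1 + r*t) ≤ A * (1+t)^r := by
          exact mul_le_mul_of_nonneg_left hber hA0.le
      _ = (a * (1+t)) ^ r := by
          rw [Real.mul_rpow ha0.le (by linarith)]
      _ = B := by rw [hab]
  have hkey : 4*α ≤ A * (r*t) := by
    have heq : A * (r*t) = (A*r*(4*α))/a := by rw [ht_def]; ring
    rw [heq, le_div_iff₀ ha0]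
    nlinarith [mul_le_mul_of_nonneg_left hr hA0.le]
  have hAB : A + 4*α ≤ B := by nlinarith
  have hA2 : A ≤ (2:ℝ)^r := Real.rpow_le_rpow ha0.le ha2 (by linarith)
  have hB3 : B ≤ (3:ℝ)^r := Real.rpow_le_rpow hb0.le hb3 (by linarith)
  have h20 : (0:ℝ) < (2:ℝ)^r := Real.rpow_pos_of_pos (by norm_num) _
  have h30 : (0:ℝ) < (3:ℝ)^r := Real.rpow_pos_of_pos (by norm_num) _
  have hfrac : 4*α/((2:ℝ)^r*(3:ℝ)^r) ≤ (B-A)/(A*B) :=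
    div_le_div₀ (by linarith) (by linarith) (by positivity) (by nlinarith)
  have hq1 : (B-A)/(A*B) = a^(-r) - b^(-r) := by
    rw [Real.rpow_neg ha0.le, Real.rpow_neg hb0.le, ← hA_def, ← hB_def]
    field_simp
  have h6 : 4 * (6:ℝ)^(-r) * α = 4*α/((2:ℝ)^r*(3:ℝ)^r) := by
    rw [Real.rpow_neg (by norm_num : (0:ℝ) ≤ 6)]
    rw [show ((2:ℝ)^r*(3:ℝ)^r) = (6:ℝ)^r by
      rw [← Real.mul_rpow (by norm_num) (by norm_num)]; norm_num]
    ring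
  rw [h6]
  calc 4*α/((2:ℝ)^r*(3:ℝ)^r) ≤ (B-A)/(A*B) := hfrac
    _ = a^(-r) - b^(-r) := hq1

lemma aux_main {q α : ℝ} (hq : 2 < q) (hα : 0 < α) (hα2 : α ≤ 1/2) :
    (∑' k : ℕ, ((2*(k:ℝ)+2*α)^(-q) + (2*(k:ℝ)+2-2*α)^(-q))) *
      (∑' k : ℕ, ((2*(k:ℝ)+2*α)^(-(q-2)) + (2*(k:ℝ)+2-2*α)^(-(q-2))
        - 2*(2*(k:ℝ)+2)^(-(q-2)))) -
      (∑' k : ℕ, ((2*(k:ℝ)+2*α)^(-(q-1)) - (2*(k:ℝ)+2-2*α)^(-(q-1))))^2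
    ≥ (4 * (12:ℝ)^(-(q-1))) * α^(-(q-2)) := by
  have hb1 : ∀ k : ℕ, (0:ℝ) < 2*(k:ℝ)+2*α := fun k => by positivity
  have hb2 : ∀ k : ℕ, (0:ℝ) < 2*(k:ℝ)+2-2*α := fun k => by
    have := k.cast_nonneg (α := ℝ); linarith
  have hb3 : ∀ k : ℕ, (0:ℝ) < 2*(k:ℝ)+2 := fun k => by positivity
  -- convenient conversion for the `2-2α` shifted series
  have econv : ∀ s : ℝ, (fun k : ℕ => (2*(k:ℝ)+2-2*α)^(-s))
      = (fun k : ℕ => (2*(k:ℝ)+(2-2*α))^(-s)) := by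
    intro s; funext k; congr 1; ring
  ------------------------------------------------------------------
  -- Part A₁
  ------------------------------------------------------------------
  have hsum1a : Summable (fun k : ℕ => (2*(k:ℝ)+2*α)^(-q)) :=
    aux_summable (by positivity) (by linarith)
  have hsum1b : Summable (fun k : ℕ => (2*(k:ℝ)+2-2*α)^(-q)) := by
    rw [econv]; exact aux_summable (by linarith) (by linarith)
  have hsum1 : Summable (fun k : ℕ => (2*(k:ℝ)+2*α)^(-q) + (2*(k:ℝ)+2-2*α)^(-q)) :=
    hsum1a.add hsum1b
  have hA1 : (2*α)^(-q) ≤ ∑' k : ℕ, ((2*(k:ℝ)+2*α)^(-q) + (2*(k:ℝ)+2-2*α)^(-q)) := by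
    have h0 := Summable.le_tsum hsum1 0 (fun j _ =>
      add_nonneg (Real.rpow_pos_of_pos (hb1 j) _).le (Real.rpow_pos_of_pos (hb2 j) _).le)
    have h00 : (2*α)^(-q) ≤ (2*((0:ℕ):ℝ)+2*α)^(-q) + (2*((0:ℕ):ℝ)+2-2*α)^(-q) := by
      have h1 : 0 ≤ (2*((0:ℕ):ℝ)+2-2*α)^(-q) := (Real.rpow_pos_of_pos (hb2 0) _).le
      have h2 : (2*((0:ℕ):ℝ)+2*α)^(-q) = (2*α)^(-q) := by norm_num
      linarith
    exact h00.trans h0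
  ------------------------------------------------------------------
  -- Part A₂
  ------------------------------------------------------------------
  have hs0 : (0:ℝ) < q - 2 := by linarith
  -- telescoping part P
  have hgmono : ∀ k : ℕ, (2*((k+1:ℕ):ℝ)+2*α)^(-(q-2)) ≤ (2*(k:ℝ)+2*α)^(-(q-2)) :=
    fun k => Real.rpow_le_rpow_of_nonpos (hb1 k) (by push_cast; linarith) (by linarith)
  have hP : HasSum (fun k : ℕ => (2*(k:ℝ)+2*α)^(-(q-2)) - (2*((k+1:ℕ):ℝ)+2*α)^(-(q-2)))
      ((2*((0:ℕ):ℝ)+2*α)^(-(q-2))) :=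
    aux_telescope hgmono (aux_tendsto (by positivity) hs0)
  have hPeq : (fun k : ℕ => (2*(k:ℝ)+2*α)^(-(q-2)) - (2*((k+1:ℕ):ℝ)+2*α)^(-(q-2)))
      = (fun k : ℕ => (2*(k:ℝ)+2*α)^(-(q-2)) - (2*(k:ℝ)+2+2*α)^(-(q-2))) := by
    funext k; congr 2; push_cast; ring
  rw [hPeq] at hP
  -- positive part Q
  have hQnn : ∀ k : ℕ, 0 ≤ (2*(k:ℝ)+2+2*α)^(-(q-2)) + (2*(k:ℝ)+2-2*α)^(-(q-2))
      - 2*(2*(k:ℝ)+2)^(-(q-2)) := by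
    intro k
    have := aux_midpoint (x := 2*(k:ℝ)+2) (h := 2*α) (s := q-2)
      (by linarith) (by linarith) (hb2 k)
    linarith
  -- telescoping comparison series R for Q
  have hg2mono : ∀ k : ℕ, (2*((k+1:ℕ):ℝ)+2-2*α)^(-(q-2)) ≤ (2*(k:ℝ)+2-2*α)^(-(q-2)) :=
    fun k => Real.rpow_le_rpow_of_nonpos (hb2 k) (by push_cast; linarith) (by linarith)
  have hR : HasSum (fun k : ℕ => (2*(k:ℝ)+2-2*α)^(-(q-2)) - (2*((k+1:ℕ):ℝ)+2-2*α)^(-(q-2)))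
      ((2*((0:ℕ):ℝ)+2-2*α)^(-(q-2))) := by
    refine aux_telescope hg2mono ?_
    have h := aux_tendsto (c := 2-2*α) (by linarith) hs0
    rw [← econv] at h; exact h
  have hQle : ∀ k : ℕ, (2*(k:ℝ)+2+2*α)^(-(q-2)) + (2*(k:ℝ)+2-2*α)^(-(q-2))
      - 2*(2*(k:ℝ)+2)^(-(q-2))
      ≤ (2*(k:ℝ)+2-2*α)^(-(q-2)) - (2*((k+1:ℕ):ℝ)+2-2*α)^(-(q-2)) := by
    intro k
    have e1 : (2*(k:ℝ)+2+2*α)^(-(q-2)) ≤ (2*(k:ℝ)+2)^(-(q-2)) :=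
      Real.rpow_le_rpow_of_nonpos (hb3 k) (by linarith) (by linarith)
    have e2 : (2*((k+1:ℕ):ℝ)+2-2*α)^(-(q-2)) ≤ (2*(k:ℝ)+2)^(-(q-2)) :=
      Real.rpow_le_rpow_of_nonpos (hb3 k) (by push_cast; linarith) (by linarith)
    linarith
  have hsumQ : Summable (fun k : ℕ => (2*(k:ℝ)+2+2*α)^(-(q-2)) + (2*(k:ℝ)+2-2*α)^(-(q-2))
      - 2*(2*(k:ℝ)+2)^(-(q-2))) :=
    Summable.of_nonneg_of_le hQnn hQle hR.summable
  have hsplit2 : (fun k : ℕ => (2*(k:ℝ)+2*α)^(-(q-2)) + (2*(k:ℝ)+2-2*α)^(-(q-2))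
      - 2*(2*(k:ℝ)+2)^(-(q-2)))
      = (fun k : ℕ => ((2*(k:ℝ)+2*α)^(-(q-2)) - (2*(k:ℝ)+2+2*α)^(-(q-2)))
        + ((2*(k:ℝ)+2+2*α)^(-(q-2)) + (2*(k:ℝ)+2-2*α)^(-(q-2)) - 2*(2*(k:ℝ)+2)^(-(q-2)))) := by
    funext k; ring
  have hA2 : (2*α)^(-(q-2)) ≤ ∑' k : ℕ, ((2*(k:ℝ)+2*α)^(-(q-2)) + (2*(k:ℝ)+2-2*α)^(-(q-2))
      - 2*(2*(k:ℝ)+2)^(-(q-2))) := by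
    rw [hsplit2, Summable.tsum_add hP.summable hsumQ, hP.tsum_eq]
    have h1 : (0:ℝ) ≤ ∑' k : ℕ, ((2*(k:ℝ)+2+2*α)^(-(q-2)) + (2*(k:ℝ)+2-2*α)^(-(q-2))
        - 2*(2*(k:ℝ)+2)^(-(q-2))) := tsum_nonneg hQnn
    have h2 : (2*((0:ℕ):ℝ)+2*α)^(-(q-2)) = (2*α)^(-(q-2)) := by norm_num
    linarith
  ------------------------------------------------------------------
  -- Part A₃
  ------------------------------------------------------------------
  have hr1 : (1:ℝ) < q - 1 := by linarith
  have hu : Summable (fun k : ℕ => (2*(k:ℝ)+2*α)^(-(q-1))) :=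
    aux_summable (by positivity) hr1
  have hv : Summable (fun k : ℕ => (2*(k:ℝ)+2-2*α)^(-(q-1))) := by
    rw [econv]; exact aux_summable (by linarith) hr1
  have hA3nn : (0:ℝ) ≤ ∑' k : ℕ, ((2*(k:ℝ)+2*α)^(-(q-1)) - (2*(k:ℝ)+2-2*α)^(-(q-1))) := by
    refine tsum_nonneg (fun k => sub_nonneg.2 ?_)
    exact Real.rpow_le_rpow_of_nonpos (hb1 k) (by linarith) (by linarith)
  -- notation
  set u0 : ℝ := (2*α)^(-(q-1)) with hu0_def
  set d0 : ℝ := (2-2*α)^(-(q-1)) - (2+2*α)^(-(q-1)) with hd0_def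
  have hu0pos : 0 < u0 := Real.rpow_pos_of_pos (by linarith) _
  have hd0nn : 0 ≤ d0 := by
    rw [hd0_def]
    refine sub_nonneg.2 (Real.rpow_le_rpow_of_nonpos (by linarith) (by linarith) (by linarith))
  have hd0le : d0 ≤ u0 := by
    rw [hd0_def, hu0_def]
    have h1 : (2-2*α)^(-(q-1)) ≤ (2*α)^(-(q-1)) :=
      Real.rpow_le_rpow_of_nonpos (by linarith) (by linarith) (by linarith)
    have h2 : 0 < (2+2*α)^(-(q-1)) := Real.rpow_pos_of_pos (by linarith) _
    linarith
  have hA3ub : (∑' k : ℕ, ((2*(k:ℝ)+2*α)^(-(q-1)) - (2*(k:ℝ)+2-2*α)^(-(q-1)))) ≤ u0 - d0 := by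
    rw [Summable.tsum_sub hu hv]
    have hu1 : Summable (fun k : ℕ => (2*((k+1:ℕ):ℝ)+2*α)^(-(q-1))) :=
      (summable_nat_add_iff (f := fun k : ℕ => (2*(k:ℝ)+2*α)^(-(q-1))) 1).mpr hu
    have hu2 : Summable (fun k : ℕ => (2*((k+1+1:ℕ):ℝ)+2*α)^(-(q-1))) :=
      (summable_nat_add_iff (f := fun k : ℕ => (2*((k+1:ℕ):ℝ)+2*α)^(-(q-1))) 1).mpr hu1
    have hv1 : Summable (fun k : ℕ => (2*((k+1:ℕ):ℝ)+2-2*α)^(-(q-1))) :=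
      (summable_nat_add_iff (f := fun k : ℕ => (2*(k:ℝ)+2-2*α)^(-(q-1))) 1).mpr hv
    have h1 : (∑' k : ℕ, (2*(k:ℝ)+2-2*α)^(-(q-1)))
        = (2*((0:ℕ):ℝ)+2-2*α)^(-(q-1)) + ∑' k : ℕ, (2*((k+1:ℕ):ℝ)+2-2*α)^(-(q-1)) :=
      Summable.tsum_eq_zero_add hv
    have h3 : (∑' k : ℕ, (2*(k:ℝ)+2*α)^(-(q-1)))
        = (2*((0:ℕ):ℝ)+2*α)^(-(q-1)) + ∑' k : ℕ, (2*((k+1:ℕ):ℝ)+2*α)^(-(q-1)) :=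
      Summable.tsum_eq_zero_add hu
    have h2 : (∑' k : ℕ, (2*((k+1:ℕ):ℝ)+2*α)^(-(q-1)))
        = (2*((0+1:ℕ):ℝ)+2*α)^(-(q-1)) + ∑' k : ℕ, (2*((k+1+1:ℕ):ℝ)+2*α)^(-(q-1)) :=
      Summable.tsum_eq_zero_add hu1
    have h4 : (∑' k : ℕ, (2*((k+1+1:ℕ):ℝ)+2*α)^(-(q-1)))
        ≤ ∑' k : ℕ, (2*((k+1:ℕ):ℝ)+2-2*α)^(-(q-1)) := by
      refine Summable.tsum_le_tsum (fun k => ?_) hu2 hv1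
      refine Real.rpow_le_rpow_of_nonpos ?_ (by push_cast; linarith) (by linarith)
      push_cast
      have := k.cast_nonneg (α := ℝ); linarith
    have e1 : (2*((0:ℕ):ℝ)+2-2*α)^(-(q-1)) = (2-2*α)^(-(q-1)) := by norm_num
    have e2 : (2*((0+1:ℕ):ℝ)+2*α)^(-(q-1)) = (2+2*α)^(-(q-1)) := by norm_num
    have e3 : (2*((0:ℕ):ℝ)+2*α)^(-(q-1)) = (2*α)^(-(q-1)) := by norm_num
    rw [hu0_def, hd0_def]
    rw [e1] at h1; rw [e2] at h2; rw [e3] at h3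
    linarith
  ------------------------------------------------------------------
  -- assembly
  ------------------------------------------------------------------
  set a1 := ∑' k : ℕ, ((2*(k:ℝ)+2*α)^(-q) + (2*(k:ℝ)+2-2*α)^(-q)) with ha1_def
  set a2 := ∑' k : ℕ, ((2*(k:ℝ)+2*α)^(-(q-2)) + (2*(k:ℝ)+2-2*α)^(-(q-2))
      - 2*(2*(k:ℝ)+2)^(-(q-2))) with ha2_def
  set a3 := ∑' k : ℕ, ((2*(k:ℝ)+2*α)^(-(q-1)) - (2*(k:ℝ)+2-2*α)^(-(q-1))) with ha3_def
  have hx1 : (0:ℝ) < (2*α)^(-q) := Real.rpow_pos_of_pos (by linarith) _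
  have hx2 : (0:ℝ) < (2*α)^(-(q-2)) := Real.rpow_pos_of_pos (by linarith) _
  have hmul : (2*α)^(-q) * (2*α)^(-(q-2)) = u0^2 := by
    rw [hu0_def, ← Real.rpow_add (by linarith : (0:ℝ) < 2*α), sq,
      ← Real.rpow_add (by linarith : (0:ℝ) < 2*α)]
    congr 1; ring
  have hprod : u0^2 ≤ a1 * a2 := by
    calc u0^2 = (2*α)^(-q) * (2*α)^(-(q-2)) := hmul.symm
      _ ≤ a1 * a2 := mul_le_mul hA1 hA2 hx2.le (hx1.le.trans hA1)
  have hsq : a3^2 ≤ (u0 - d0)^2 := pow_le_pow_left₀ hA3nn hA3ub 2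
  have hmain : u0 * d0 ≤ a1 * a2 - a3^2 := by nlinarith
  -- final computation
  have hd0lb : 4 * (6:ℝ)^(-(q-1)) * α ≤ d0 := aux_d0 hα hα2 (by linarith)
  have h12 : (12:ℝ)^(-(q-1)) = (2:ℝ)^(-(q-1)) * (6:ℝ)^(-(q-1)) := by
    rw [← Real.mul_rpow (by norm_num) (by norm_num)]; norm_num
  have hu0eq : u0 = (2:ℝ)^(-(q-1)) * α^(-(q-1)) := by
    rw [hu0_def, Real.mul_rpow (by norm_num) hα.le]
  have hαeq : α^(-(q-2)) = α^(-(q-1)) * α := by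
    have : α^(-(q-2)) = α^(-(q-1)) * α^(1:ℝ) := by
      rw [← Real.rpow_add hα]; congr 1; ring
    rwa [Real.rpow_one] at this
  have hfin : (4 * (12:ℝ)^(-(q-1))) * α^(-(q-2)) ≤ u0 * d0 := by
    have h2p : (0:ℝ) < (2:ℝ)^(-(q-1)) := Real.rpow_pos_of_pos (by norm_num) _
    have hαp : (0:ℝ) < α^(-(q-1)) := Real.rpow_pos_of_pos hα _
    calc (4 * (12:ℝ)^(-(q-1))) * α^(-(q-2))
        = ((2:ℝ)^(-(q-1)) * α^(-(q-1))) * (4 * (6:ℝ)^(-(q-1)) * α) := by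
          rw [h12, hαeq]; ring
      _ ≤ ((2:ℝ)^(-(q-1)) * α^(-(q-1))) * d0 := by
          exact mul_le_mul_of_nonneg_left hd0lb (by positivity)
      _ = u0 * d0 := by rw [hu0eq]
  linarith

theorem stmt16 (q : ℝ) (hq : 2 < q) :
    ∃ C > 0, ∀ α ∈ Set.Ioc (0:ℝ) (1/2),
      (∑' k : ℕ, ((2*(k:ℝ)+2*α)^(-q) + (2*(k:ℝ)+2-2*α)^(-q))) *
        (∑' k : ℕ, ((2*(k:ℝ)+2*α)^(-(q-2)) + (2*(k:ℝ)+2-2*α)^(-(q-2))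
          - 2*(2*(k:ℝ)+2)^(-(q-2)))) -
        (∑' k : ℕ, ((2*(k:ℝ)+2*α)^(-(q-1)) - (2*(k:ℝ)+2-2*α)^(-(q-1))))^2
      ≥ C * α^(-(q-2)) := by
  refine ⟨4 * (12:ℝ)^(-(q-1)), by positivity, fun α hα => ?_⟩
  exact aux_main hq hα.1 hα.2
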